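/- Let k be a field and n a natural number. The map sending a simplicial complex Δ on Fin n (a set of finsets of Fin n closed under taking subsets) to its Stanley-Reisner ideal, the ideal of MvPolynomial (Fin n) k generated by {mon N : N ∉ Δ}, is a bijection from the set of all simplicial complexes on Fin n onto the set of all ideals of MvPolynomial (Fin n) k that are generated by squarefree monomials; its inverse sends an ideal I to its Stanley-Reisner complex {F : Finset (Fin n) | mon F ∉ I}. -/

import Mathlib

/-- The squarefree monomial `∏ i ∈ F, X i` associated to a finset `F` of `Fin n`. -/
noncomputable def mon (k : Type*) [Field k] (n : ℕ) (F : Finset (Fin n)) :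
    MvPolynomial (Fin n) k :=
  ∏ i ∈ F, MvPolynomial.X i

/-- The Stanley-Reisner ideal of a set `Δ` of finsets of `Fin n`. -/
noncomputable def srIdeal (k : Type*) [Field k] (n : ℕ) (Δ : Set (Finset (Fin n))) :
    Ideal (MvPolynomial (Fin n) k) :=
  Ideal.span (mon k n '' {N | N ∉ Δ})

/-- The Stanley-Reisner complex of an ideal `I` of `MvPolynomial (Fin n) k`. -/
def srComplex (k : Type*) [Field k] (n : ℕ) (I : Ideal (MvPolynomial (Fin n) k)) :
    Set (Finset (Fin n)) :=
  {F | mon k n F ∉ I}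

noncomputable def deg (n : ℕ) (F : Finset (Fin n)) : Fin n →₀ ℕ :=
  ∑ i ∈ F, Finsupp.single i 1

lemma deg_apply (n : ℕ) (F : Finset (Fin n)) (j : Fin n) :
    deg n F j = if j ∈ F then 1 else 0 := by
  classical
  simp [deg, Finsupp.finset_sum_apply, Finsupp.single_apply, Finset.sum_ite_eq F j]

lemma deg_le_iff (n : ℕ) (F G : Finset (Fin n)) : deg n F ≤ deg n G ↔ F ⊆ G := by
  constructor
  · intro h i hi
    have := h i
    rw [deg_apply, deg_apply, if_pos hi] at this
    by_contra hg
    rw [if_neg hg] at this; omega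
  · intro h i
    rw [deg_apply, deg_apply]
    by_cases hi : i ∈ F
    · rw [if_pos hi, if_pos (h hi)]
    · simp [hi]

lemma mon_eq (k : Type*) [Field k] (n : ℕ) (F : Finset (Fin n)) :
    mon k n F = MvPolynomial.monomial (deg n F) (1 : k) := by
  classical
  unfold mon deg
  induction F using Finset.induction with
  | empty => simp
  | insert _ _ hx ih =>
      rw [Finset.prod_insert hx, Finset.sum_insert hx, ih, MvPolynomial.X,
        MvPolynomial.monomial_mul, one_mul]

lemma mon_mem_iff (k : Type*) [Field k] (n : ℕ) (F : Finset (Fin n))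
    (𝒢 : Set (Finset (Fin n))) :
    mon k n F ∈ Ideal.span (mon k n '' 𝒢) ↔ ∃ G ∈ 𝒢, G ⊆ F := by
  classical
  have himg : mon k n '' 𝒢 = (fun s => MvPolynomial.monomial s (1 : k)) '' (deg n '' 𝒢) := by
    rw [Set.image_image]; exact Set.image_congr fun G _ => mon_eq k n G
  rw [mon_eq, himg, MvPolynomial.mem_ideal_span_monomial_image]
  rw [MvPolynomial.support_monomial]
  simp only [if_neg (one_ne_zero (α := k)), Finset.mem_singleton]
  constructor
  · intro h
    obtain ⟨si, ⟨G, hG, rfl⟩, hle⟩ := h _ rfl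
    exact ⟨G, hG, (deg_le_iff n G F).mp hle⟩
  · rintro ⟨G, hG, hsub⟩ xi rfl
    exact ⟨deg n G, ⟨G, hG, rfl⟩, (deg_le_iff n G F).mpr hsub⟩

lemma srComplex_closed (k : Type*) [Field k] (n : ℕ) (I : Ideal (MvPolynomial (Fin n) k)) :
    ∀ A ∈ srComplex k n I, ∀ B ⊆ A, B ∈ srComplex k n I := by
  intro A hA B hBA
  simp only [srComplex, Set.mem_setOf_eq] at *
  intro hB
  apply hA
  have : mon k n A = mon k n (A \ B) * mon k n B := by
    rw [mon, mon, mon, Finset.prod_sdiff hBA]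
  rw [this]
  exact I.mul_mem_left _ hB

lemma srComplex_srIdeal (k : Type*) [Field k] (n : ℕ) (Δ : Set (Finset (Fin n)))
    (hΔ : ∀ A ∈ Δ, ∀ B ⊆ A, B ∈ Δ) : srComplex k n (srIdeal k n Δ) = Δ := by
  ext F
  simp only [srComplex, srIdeal, Set.mem_setOf_eq, mon_mem_iff]
  constructor
  · intro h
    by_contra hF
    exact h ⟨F, hF, subset_rfl⟩
  · rintro hF ⟨N, hN, hNF⟩
    exact hN (hΔ F hF N hNF)

lemma srIdeal_srComplex (k : Type*) [Field k] (n : ℕ) (I : Ideal (MvPolynomial (Fin n) k))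
    (hI : ∃ 𝒢 : Set (Finset (Fin n)), I = Ideal.span (mon k n '' 𝒢)) :
    srIdeal k n (srComplex k n I) = I := by
  obtain ⟨𝒢, rfl⟩ := hI
  apply le_antisymm
  · rw [srIdeal, Ideal.span_le]
    rintro _ ⟨N, hN, rfl⟩
    simpa [srComplex] using hN
  · apply Ideal.span_mono
    apply Set.image_mono
    intro G hG
    simp only [srComplex, Set.mem_setOf_eq, not_not]
    exact Ideal.subset_span ⟨G, hG, rfl⟩


theorem stanleyReisner_bijection (k : Type*) [Field k] (n : ℕ) :
    Set.BijOn (srIdeal k n)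
      {Δ : Set (Finset (Fin n)) | ∀ A ∈ Δ, ∀ B ⊆ A, B ∈ Δ}
      {I : Ideal (MvPolynomial (Fin n) k) |
        ∃ 𝒢 : Set (Finset (Fin n)), I = Ideal.span (mon k n '' 𝒢)} ∧
    (∀ Δ : Set (Finset (Fin n)), (∀ A ∈ Δ, ∀ B ⊆ A, B ∈ Δ) →
      srComplex k n (srIdeal k n Δ) = Δ) ∧
    (∀ I : Ideal (MvPolynomial (Fin n) k),
      (∃ 𝒢 : Set (Finset (Fin n)), I = Ideal.span (mon k n '' 𝒢)) →
      srIdeal k n (srComplex k n I) = I) := by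
  refine ⟨⟨fun Δ _ => ⟨{N | N ∉ Δ}, rfl⟩, fun Δ₁ h₁ Δ₂ h₂ he => ?_, fun I hI => ?_⟩,
    srComplex_srIdeal k n, srIdeal_srComplex k n⟩
  · rw [← srComplex_srIdeal k n Δ₁ h₁, ← srComplex_srIdeal k n Δ₂ h₂, he]
  · exact ⟨srComplex k n I, srComplex_closed k n I, srIdeal_srComplex k n I hI⟩
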